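/- arXiv:2011.10340 — 2 statements merged into one kernel-verified Lean document; each statement's English description precedes it below -/
import Mathlib

section
/- For the permutation representation of S_n on ℂ^n and any transposition (i j), the Kirchhoff difference κ_{ij} = 1 − (i j) ∈ ℂ[S_n] is a Lie element: for all m, Grp_m(1 − (i j)) = Alg_m(1 − (i j)) as operators on Λ^m ℂ^n. -/
open ExteriorAlgebra

variable (k : Type*) [Field k] {G : Type*} [Group G]
variable {V : Type*} [AddCommGroup V] [Module k V]

/-- The alternating map `v ↦ Σ_p v_1 ∧ … ∧ f(v_p) ∧ … ∧ v_m`, landing in the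
exterior algebra. -/
noncomputable def algAlt (f : Module.End k V) (m : ℕ) :
    V [⋀^Fin m]→ₗ[k] ExteriorAlgebra k V where
  toMultilinearMap :=
    ∑ p : Fin m, (ιMulti k m).toMultilinearMap.compLinearMap
      (Function.update (fun _ : Fin m => (LinearMap.id : V →ₗ[k] V)) p f)
  map_eq_zero_of_eq' := by
    intro v i j hv hij
    show (∑ p : Fin m, (ιMulti k m).toMultilinearMap.compLinearMap
      (Function.update (fun _ : Fin m => (LinearMap.id : V →ₗ[k] V)) p f)) v = 0
    have key : ∀ p : Fin m,
        ((ιMulti k m).toMultilinearMap.compLinearMap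
          (Function.update (fun _ : Fin m => (LinearMap.id : V →ₗ[k] V)) p f)) v
        = ιMulti k m (Function.update v p (f (v p))) := by
      intro p
      have harg : (fun x => (Function.update (fun _ : Fin m => (LinearMap.id : V →ₗ[k] V)) p f x) (v x))
          = Function.update v p (f (v p)) := by
        funext x
        rcases eq_or_ne x p with rfl | hx
        · simp
        · simp [Function.update_of_ne hx]
      rw [MultilinearMap.compLinearMap_apply, harg]
      rfl
    rw [MultilinearMap.sum_apply]
    calc (∑ p : Fin m, ((ιMulti k m).toMultilinearMap.compLinearMap
          (Function.update (fun _ : Fin m => (LinearMap.id : V →ₗ[k] V)) p f)) v)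
        = ∑ p ∈ ({i, j} : Finset (Fin m)), ιMulti k m (Function.update v p (f (v p))) := by
          rw [Finset.sum_congr rfl (fun p _ => key p)]
          refine (Finset.sum_subset (Finset.subset_univ _) ?_).symm
          intro p _ hp
          simp only [Finset.mem_insert, Finset.mem_singleton, not_or] at hp
          exact AlternatingMap.map_eq_zero_of_eq _ _
            (by rw [Function.update_of_ne (Ne.symm ?_), Function.update_of_ne (Ne.symm ?_), hv]
                exacts [hp.2, hp.1]) hij
      _ = 0 := by
          rw [Finset.sum_pair hij]
          have hcomp : Function.update v j (f (v j))
              = (Function.update v i (f (v i))) ∘ Equiv.swap i j := by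
            funext x
            rcases eq_or_ne x i with rfl | hxi
            · show Function.update v j (f (v j)) x = Function.update v x (f (v x)) (Equiv.swap x j x)
              rw [Function.update_of_ne hij, Equiv.swap_apply_left,
                Function.update_of_ne (Ne.symm hij)]
              exact hv
            rcases eq_or_ne x j with rfl | hxj
            · show Function.update v x (f (v x)) x = Function.update v i (f (v i)) (Equiv.swap i x x)
              rw [Function.update_self, Equiv.swap_apply_right, Function.update_self, hv]
            · show Function.update v j (f (v j)) x = Function.update v i (f (v i)) (Equiv.swap i j x)
              rw [Function.update_of_ne hxj, Equiv.swap_apply_of_ne_of_ne hxi hxj,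
                Function.update_of_ne hxi]
          rw [hcomp, AlternatingMap.map_swap _ _ hij, add_neg_cancel]

/-- The derivation `D_f` on the exterior algebra extending `f : V → V`. -/
noncomputable def derOp (f : Module.End k V) :
    ExteriorAlgebra k V →ₗ[k] ExteriorAlgebra k V :=
  ExteriorAlgebra.liftAlternating (fun m => algAlt k f m)

theorem derOp_mem (f : Module.End k V) (m : ℕ) :
    ∀ x ∈ ⋀[k]^m V, derOp k f x ∈ ⋀[k]^m V := by
  intro x hx
  rw [← ExteriorAlgebra.ιMulti_span_fixedDegree] at hx ⊢
  induction hx using Submodule.span_induction with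
  | mem x hx =>
      obtain ⟨v, rfl⟩ := hx
      rw [derOp, ExteriorAlgebra.liftAlternating_apply_ιMulti]
      show (∑ p : Fin m, (ιMulti k m).toMultilinearMap.compLinearMap
        (Function.update (fun _ : Fin m => (LinearMap.id : V →ₗ[k] V)) p f)) v ∈ _
      rw [MultilinearMap.sum_apply]
      refine Submodule.sum_mem _ fun p _ => Submodule.subset_span ⟨_, rfl⟩
  | zero => simp
  | add x y _ _ hx hy => rw [map_add]; exact Submodule.add_mem _ hx hy
  | smul c x _ hx => rw [map_smul]; exact Submodule.smul_mem _ c hx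

theorem mapOp_mem (f : Module.End k V) (m : ℕ) :
    ∀ x ∈ ⋀[k]^m V, (ExteriorAlgebra.map f) x ∈ ⋀[k]^m V := by
  intro x hx
  rw [← ExteriorAlgebra.ιMulti_span_fixedDegree] at hx ⊢
  induction hx using Submodule.span_induction with
  | mem x hx =>
      obtain ⟨v, rfl⟩ := hx
      rw [ExteriorAlgebra.map_apply_ιMulti]
      exact Submodule.subset_span ⟨_, rfl⟩
  | zero => simp
  | add x y _ _ hx hy => rw [map_add]; exact Submodule.add_mem _ hx hy
  | smul c x _ hx => rw [map_smul]; exact Submodule.smul_mem _ c hx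

/-- `Grp_m : k[G] → End(Λ^m V)`, the linear extension of `g ↦ (v₁∧…∧vₘ ↦ g v₁∧…∧g vₘ)`. -/
noncomputable def GrpOp (ρ : Representation k G V) (m : ℕ) :
    MonoidAlgebra k G →ₗ[k] Module.End k (⋀[k]^m V) :=
  Finsupp.lift (Module.End k (⋀[k]^m V)) k G
    (fun g => ((ExteriorAlgebra.map (ρ g)).toLinearMap).restrict (mapOp_mem k (ρ g) m))
    ∘ₗ (MonoidAlgebra.coeffLinearEquiv k : MonoidAlgebra k G ≃ₗ[k] (G →₀ k)).toLinearMap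

/-- `Alg_m : k[G] → End(Λ^m V)`, the linear extension of
`g ↦ (v₁∧…∧vₘ ↦ Σ_p v₁∧…∧g vₚ∧…∧vₘ)`. -/
noncomputable def AlgOp (ρ : Representation k G V) (m : ℕ) :
    MonoidAlgebra k G →ₗ[k] Module.End k (⋀[k]^m V) :=
  Finsupp.lift (Module.End k (⋀[k]^m V)) k G
    (fun g => (derOp k (ρ g)).restrict (derOp_mem k (ρ g) m))
    ∘ₗ (MonoidAlgebra.coeffLinearEquiv k : MonoidAlgebra k G ≃ₗ[k] (G →₀ k)).toLinearMap

/-- `x ∈ k[G]` is a Lie element for the representation `ρ` if `Grp_m x = Alg_m x`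
for all `m = 0, 1, …, dim V`. -/
def IsLieElement (ρ : Representation k G V) (x : MonoidAlgebra k G) : Prop :=
  ∀ m ≤ Module.finrank k V, GrpOp k ρ m x = AlgOp k ρ m x
/-- The permutation representation of `S_n` on `ℂ^n`: `σ` sends the basis vector `v_p`
to `v_{σ(p)}`, i.e. `(σ·x) i = x (σ⁻¹ i)`. -/
noncomputable def permRep (n : ℕ) : Representation ℂ (Equiv.Perm (Fin n)) (Fin n → ℂ) where
  toFun σ := LinearMap.funLeft ℂ ℂ ⇑σ⁻¹
  map_one' := by
    ext v i
    simp
  map_mul' σ τ := by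
    refine LinearMap.ext fun v => funext fun i => ?_
    simp [LinearMap.funLeft_apply, Equiv.Perm.mul_apply, mul_inv_rev, Module.End.mul_apply]

/-- The Kirchhoff difference `κ_{ij} = 1 − (i j) ∈ ℂ[S_n]`. -/
noncomputable def kappa {n : ℕ} (i j : Fin n) : MonoidAlgebra ℂ (Equiv.Perm (Fin n)) :=
  1 - MonoidAlgebra.of ℂ (Equiv.Perm (Fin n)) (Equiv.swap i j)

theorem derOp_ιMulti (f : Module.End k V) (m : ℕ) (v : Fin m → V) :
    derOp k f (ιMulti k m v) = ∑ p : Fin m, ιMulti k m (Function.update v p (f (v p))) := by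
  rw [derOp, ExteriorAlgebra.liftAlternating_apply_ιMulti]
  show (∑ p : Fin m, (ιMulti k m).toMultilinearMap.compLinearMap
      (Function.update (fun _ : Fin m => (LinearMap.id : V →ₗ[k] V)) p f)) v = _
  rw [MultilinearMap.sum_apply]
  refine Finset.sum_congr rfl fun p _ => ?_
  have harg : (fun x => (Function.update (fun _ : Fin m => (LinearMap.id : V →ₗ[k] V)) p f x) (v x))
      = Function.update v p (f (v p)) := by
    funext x
    rcases eq_or_ne x p with rfl | hx
    · simp
    · simp [Function.update_of_ne hx]
  rw [MultilinearMap.compLinearMap_apply, harg]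
  rfl

/-- Expansion of an alternating map at a "rank-one perturbed" family: only the terms where
at most one coordinate is perturbed survive, as all perturbations are parallel to `u`. -/
theorem alt_rankOne {W : Type*} [AddCommGroup W] [Module k W] {m : ℕ}
    (g : V [⋀^Fin m]→ₗ[k] W) (v : Fin m → V) (u : V) (c : Fin m → k) :
    g (fun p => v p + c p • u) = g v + ∑ p : Fin m, g (Function.update v p (c p • u)) := by
  classical
  set w : Fin m → V := fun p => c p • u with hw
  have hsum : g (fun p => v p + c p • u)
      = ∑ s : Finset (Fin m), g (s.piecewise w v) := by
    have h := g.toMultilinearMap.map_add_univ w v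
    have harg : w + v = fun p => v p + c p • u := by
      funext p; simp [hw, add_comm]
    rw [harg] at h
    exact h
  rw [hsum]
  -- terms with at least two perturbed coordinates vanish
  have hvanish : ∀ s : Finset (Fin m), 1 < s.card → g (s.piecewise w v) = 0 := by
    intro s hs
    obtain ⟨a, ha, b, hb, hab⟩ := Finset.one_lt_card.mp hs
    set x := s.piecewise w v with hx
    have hxa : x a = c a • u := Finset.piecewise_eq_of_mem _ _ _ ha
    have hxb : x b = c b • u := Finset.piecewise_eq_of_mem _ _ _ hb
    have h1 : g x = c a • g (Function.update x a u) := by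
      conv_lhs => rw [← Function.update_eq_self a x, hxa]
      exact g.map_update_smul x a (c a) u
    have hub : (Function.update x a u) b = c b • u := by
      rw [Function.update_of_ne (Ne.symm hab), hxb]
    have h2 : g (Function.update x a u)
        = c b • g (Function.update (Function.update x a u) b u) := by
      conv_lhs => rw [← Function.update_eq_self b (Function.update x a u), hub]
      exact g.map_update_smul _ b (c b) u
    have h3 : g (Function.update (Function.update x a u) b u) = 0 := by
      refine g.map_eq_zero_of_eq _ ?_ hab
      rw [Function.update_of_ne hab, Function.update_self, Function.update_self]
    rw [h1, h2, h3, smul_zero, smul_zero]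
  -- restrict the sum to the empty set and singletons
  set T : Finset (Finset (Fin m)) :=
    insert ∅ (Finset.univ.image fun p : Fin m => ({p} : Finset (Fin m))) with hT
  have hrestrict : ∑ s : Finset (Fin m), g (s.piecewise w v)
      = ∑ s ∈ T, g (s.piecewise w v) := by
    refine (Finset.sum_subset (Finset.subset_univ T) ?_).symm
    intro s _ hs
    rw [hT, Finset.mem_insert, Finset.mem_image] at hs
    push_neg at hs
    obtain ⟨hs0, hs1⟩ := hs
    refine hvanish s ?_
    have h0 : s.card ≠ 0 := (Finset.card_pos.mpr hs0).ne'
    have h1 : s.card ≠ 1 := by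
      intro h
      obtain ⟨a, rfl⟩ := Finset.card_eq_one.mp h
      exact hs1 a (Finset.mem_univ a) rfl
    omega
  rw [hrestrict, hT, Finset.sum_insert, Finset.sum_image]
  · rw [Finset.piecewise_empty]
    congr 1
    refine Finset.sum_congr rfl fun p _ => ?_
    rw [Finset.piecewise_singleton]
  · intro a _ b _ h
    exact Finset.singleton_injective h
  · simp only [Finset.mem_image, Finset.mem_univ, true_and]
    rintro ⟨p, hp⟩
    exact Finset.singleton_ne_empty p hp

theorem permRep_swap_apply {n : ℕ} (i j : Fin n) (hij : i ≠ j) (x : Fin n → ℂ) :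
    permRep n (Equiv.swap i j) x
      = x + (x j - x i) • (Pi.single i 1 - Pi.single j 1) := by
  have hval : permRep n (Equiv.swap i j) x = fun p => x (Equiv.swap i j p) := by
    show LinearMap.funLeft ℂ ℂ ⇑(Equiv.swap i j)⁻¹ x = _
    rw [Equiv.swap_inv]
    rfl
  rw [hval]
  funext p
  simp only [Pi.add_apply, Pi.smul_apply, Pi.sub_apply, smul_eq_mul]
  rcases eq_or_ne p i with rfl | hpi
  · rw [Equiv.swap_apply_left, Pi.single_eq_same, Pi.single_eq_of_ne hij]
    ring
  rcases eq_or_ne p j with rfl | hpj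
  · rw [Equiv.swap_apply_right, Pi.single_eq_same, Pi.single_eq_of_ne hpi]
    ring
  · rw [Equiv.swap_apply_of_ne_of_ne hpi hpj, Pi.single_eq_of_ne hpi, Pi.single_eq_of_ne hpj]
    ring

/-- The Kirchhoff difference `κ_{ij} = 1 − (i j)` is a Lie element with respect to the
permutation representation of `S_n` on `ℂ^n`. -/
theorem kappa_isLieElement {n : ℕ} (i j : Fin n) (hij : i ≠ j) :
    IsLieElement ℂ (permRep n) (kappa i j) := by
  intro m _
  have hG : ∀ g : Equiv.Perm (Fin n),
      GrpOp ℂ (permRep n) m (MonoidAlgebra.of ℂ (Equiv.Perm (Fin n)) g)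
        = ((ExteriorAlgebra.map (permRep n g)).toLinearMap).restrict
            (mapOp_mem ℂ (permRep n g) m) := by
    intro g
    rw [GrpOp, MonoidAlgebra.of_apply]
    erw [Finsupp.lift_apply, Finsupp.sum_single_index]
    · exact one_smul ℂ _
    · exact zero_smul ℂ _
  have hA : ∀ g : Equiv.Perm (Fin n),
      AlgOp ℂ (permRep n) m (MonoidAlgebra.of ℂ (Equiv.Perm (Fin n)) g)
        = (derOp ℂ (permRep n g)).restrict (derOp_mem ℂ (permRep n g) m) := by
    intro g
    rw [AlgOp, MonoidAlgebra.of_apply]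
    erw [Finsupp.lift_apply, Finsupp.sum_single_index]
    · exact one_smul ℂ _
    · exact zero_smul ℂ _
  have hone : (1 : MonoidAlgebra ℂ (Equiv.Perm (Fin n)))
      = MonoidAlgebra.of ℂ (Equiv.Perm (Fin n)) 1 := (map_one _).symm
  rw [kappa, map_sub, map_sub, hone, hG, hG, hA, hA]
  refine LinearMap.ext fun x => Subtype.ext ?_
  simp only [LinearMap.sub_apply, AddSubgroupClass.coe_sub, LinearMap.restrict_coe_apply]
  erw [LinearMap.restrict_coe_apply, LinearMap.restrict_coe_apply]
  obtain ⟨x, hx⟩ := x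
  simp only
  rw [← ExteriorAlgebra.ιMulti_span_fixedDegree] at hx
  induction hx using Submodule.span_induction with
  | mem y hy =>
      obtain ⟨v, rfl⟩ := hy
      simp only [AlgHom.toLinearMap_apply]
      rw [ExteriorAlgebra.map_apply_ιMulti, ExteriorAlgebra.map_apply_ιMulti,
        derOp_ιMulti, derOp_ιMulti]
      have h1 : ⇑(permRep n 1) = id := by rw [map_one]; rfl
      simp only [h1, Function.comp_def, id_eq, Function.update_eq_self]
      have hrep : ∀ y : Fin n → ℂ, permRep n (Equiv.swap i j) y
          = y + (y j - y i) • (Pi.single i 1 - Pi.single j 1) :=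
        permRep_swap_apply i j hij
      set u : Fin n → ℂ := Pi.single i 1 - Pi.single j 1 with hu
      set c : Fin m → ℂ := fun p => v p j - v p i with hc
      have hcomp : (fun p => permRep n (Equiv.swap i j) (v p))
          = fun p => v p + c p • u := by
        funext p; rw [hrep]
      rw [hcomp, alt_rankOne]
      have hupd : ∀ p : Fin m,
          ιMulti ℂ m (Function.update v p (permRep n (Equiv.swap i j) (v p)))
            = ιMulti ℂ m v + ιMulti ℂ m (Function.update v p (c p • u)) := by
        intro p
        rw [hrep]
        rw [(ιMulti ℂ m).map_update_add v p (v p) (c p • u), Function.update_eq_self]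
      rw [Finset.sum_congr rfl fun p _ => hupd p, Finset.sum_add_distrib]
      abel
  | zero => simp
  | add y z _ _ hy hz =>
      simp only [map_add]
      rw [add_sub_add_comm, hy, hz, add_sub_add_comm]
  | smul a y _ hy =>
      simp only [map_smul]
      rw [← smul_sub, hy, smul_sub]
end

section
/- The shuffle determinant equals the coefficient of the monomial x_1 x_2 ⋯ x_n in det(A + BX)^2, where X = diag(x_1,…,x_n): sdet(A,B) = [x_1⋯x_n : det(A + BX)^2]. -/
/-- The `I`-shuffle of `A` and `B` (column convention): the matrix whose `j`-th column is
the `j`-th column of `A` if `j ∈ I` and the `j`-th column of `B` otherwise. -/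
def shuffleMatrix {n : ℕ} {R : Type*} (A B : Matrix (Fin n) (Fin n) R)
    (I : Finset (Fin n)) : Matrix (Fin n) (Fin n) R :=
  fun i j => if j ∈ I then A i j else B i j

/-- The shuffle determinant `sdet(A,B) = Σ_I det((A,B)_I) det((A,B)_{Ī})`. -/
def sdet {n : ℕ} {R : Type*} [CommRing R] (A B : Matrix (Fin n) (Fin n) R) : R :=
  ∑ I : Finset (Fin n), (shuffleMatrix A B I).det * (shuffleMatrix A B Iᶜ).det

open MvPolynomial Matrix Finset in
private lemma prod_X_eq_monomial' {n : ℕ} {R : Type*} [CommRing R] (s : Finset (Fin n)) :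
    (∏ i ∈ s, (X i : MvPolynomial (Fin n) R)) =
      monomial (∑ i ∈ s, Finsupp.single i 1) 1 := by
  induction s using Finset.cons_induction with
  | empty => simp
  | cons a s ha ih =>
    rw [Finset.prod_cons, ih, Finset.sum_cons, X, monomial_mul, one_mul]

open MvPolynomial Matrix Finset in
private lemma det_expand {n : ℕ} {R : Type*} [CommRing R] (A B : Matrix (Fin n) (Fin n) R) :
    (Matrix.det (A.map C + B.map C * Matrix.diagonal fun i : Fin n =>
        (X i : MvPolynomial (Fin n) R))) =
      ∑ s : Finset (Fin n), (∏ i ∈ sᶜ, (X i : MvPolynomial (Fin n) R)) *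
        C (shuffleMatrix A B s).det := by
  rw [← Matrix.det_transpose]
  have hM : (A.map C + B.map C * Matrix.diagonal fun i : Fin n =>
      (X i : MvPolynomial (Fin n) R))ᵀ =
      (fun i => (A.map C)ᵀ i) + (fun i => (X i : MvPolynomial (Fin n) R) • (B.map C)ᵀ i) := by
    funext i j
    show _ = (A.map C)ᵀ i j + ((X i : MvPolynomial (Fin n) R) • (B.map C)ᵀ i) j
    simp [Matrix.mul_diagonal, mul_comm]
  rw [hM]
  show ((Matrix.detRowAlternating (R := MvPolynomial (Fin n) R)
      (n := Fin n)).toMultilinearMap ((fun i => (A.map C)ᵀ i) +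
      (fun i => (X i : MvPolynomial (Fin n) R) • (B.map C)ᵀ i)) : MvPolynomial (Fin n) R) = _
  rw [MultilinearMap.map_add_univ]
  refine Finset.sum_congr rfl fun s _ => ?_
  have hmat : (sᶜ.piecewise (fun i => (B.map C)ᵀ i) (fun i => (A.map C)ᵀ i) :
      Fin n → Fin n → MvPolynomial (Fin n) R) =
      ((shuffleMatrix A B s).map C)ᵀ := by
    funext i j
    by_cases h : i ∈ s <;>
      simp [Finset.piecewise, h, shuffleMatrix, Matrix.map_apply, Matrix.transpose_apply]
  have hpiece : (s.piecewise (fun i => (A.map C)ᵀ i)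
      (fun i => (X i : MvPolynomial (Fin n) R) • (B.map C)ᵀ i)) =
      sᶜ.piecewise (fun i => (X i : MvPolynomial (Fin n) R) •
          (((shuffleMatrix A B s).map C :
            Matrix (Fin n) (Fin n) (MvPolynomial (Fin n) R))ᵀ i))
        (((shuffleMatrix A B s).map C : Matrix (Fin n) (Fin n) (MvPolynomial (Fin n) R))ᵀ) := by
    rw [← hmat]
    funext i
    by_cases h : i ∈ s <;> simp [Finset.piecewise, h]
  rw [hpiece]
  erw [(Matrix.detRowAlternating (R := MvPolynomial (Fin n) R)
      (n := Fin n)).toMultilinearMap.map_piecewise_smul]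
  show _ • Matrix.det (((shuffleMatrix A B s).map C)ᵀ) = _
  rw [Matrix.det_transpose, smul_eq_mul]
  congr 1
  rw [← RingHom.mapMatrix_apply, ← RingHom.map_det]

open MvPolynomial Matrix Finset in
/-- `sdet(A,B)` equals the coefficient of the monomial `x_1 ⋯ x_n` in `det(A + BX)²`,
where `X = diag(x_1, …, x_n)`. -/
theorem sdet_eq_coeff_det_sq {n : ℕ} {R : Type*} [CommRing R]
    (A B : Matrix (Fin n) (Fin n) R) :
    sdet A B =
      MvPolynomial.coeff (Finsupp.equivFunOnFinite.symm fun _ : Fin n => (1 : ℕ))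
        ((Matrix.det (A.map MvPolynomial.C +
            B.map MvPolynomial.C * Matrix.diagonal (fun i : Fin n => MvPolynomial.X i))) ^ 2) := by
  have key : ∀ s t : Finset (Fin n),
      ((∑ i ∈ sᶜ, Finsupp.single i 1) + ∑ i ∈ tᶜ, Finsupp.single i 1 =
        Finsupp.equivFunOnFinite.symm fun _ : Fin n => (1 : ℕ)) ↔ t = sᶜ := by
    intro s t
    rw [Finsupp.ext_iff, Finset.ext_iff]
    have happ : ∀ (u : Finset (Fin n)) (j : Fin n),
        (∑ i ∈ u, Finsupp.single i (1 : ℕ)) j = if j ∈ u then 1 else 0 := by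
      intro u j
      rw [Finset.sum_apply']
      simp [Finsupp.single_apply]
    constructor
    · intro h j
      have := h j
      rw [Finsupp.add_apply, happ, happ] at this
      simp only [Finsupp.coe_equivFunOnFinite_symm] at this
      by_cases h1 : j ∈ s <;> by_cases h2 : j ∈ t <;> simp_all
    · intro h
      intro j
      have := h j
      rw [Finsupp.add_apply, happ, happ]
      simp only [Finsupp.coe_equivFunOnFinite_symm]
      by_cases h1 : j ∈ s <;> by_cases h2 : j ∈ t <;> simp_all
  rw [det_expand, sq, Finset.sum_mul_sum]
  rw [MvPolynomial.coeff_sum]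
  have term : ∀ s t : Finset (Fin n),
      (∏ i ∈ sᶜ, (X i : MvPolynomial (Fin n) R)) * C (shuffleMatrix A B s).det *
        ((∏ i ∈ tᶜ, (X i : MvPolynomial (Fin n) R)) * C (shuffleMatrix A B t).det) =
      monomial ((∑ i ∈ sᶜ, Finsupp.single i 1) + ∑ i ∈ tᶜ, Finsupp.single i 1)
        ((shuffleMatrix A B s).det * (shuffleMatrix A B t).det) := by
    intro s t
    rw [prod_X_eq_monomial', prod_X_eq_monomial']
    rw [show (C (shuffleMatrix A B s).det : MvPolynomial (Fin n) R) =
      monomial 0 (shuffleMatrix A B s).det from rfl]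
    rw [show (C (shuffleMatrix A B t).det : MvPolynomial (Fin n) R) =
      monomial 0 (shuffleMatrix A B t).det from rfl]
    rw [monomial_mul, monomial_mul, monomial_mul]
    congr 1 <;> simp
  simp only [MvPolynomial.coeff_sum, term, MvPolynomial.coeff_monomial]
  have : ∀ s : Finset (Fin n),
      (∑ t : Finset (Fin n),
        if ((∑ i ∈ sᶜ, Finsupp.single i 1) + ∑ i ∈ tᶜ, Finsupp.single i 1 =
            Finsupp.equivFunOnFinite.symm fun _ : Fin n => (1 : ℕ)) then
          (shuffleMatrix A B s).det * (shuffleMatrix A B t).det else 0) =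
      (shuffleMatrix A B s).det * (shuffleMatrix A B sᶜ).det := by
    intro s
    rw [Finset.sum_congr rfl fun t _ => by rw [if_congr (key s t) rfl rfl]]
    simp
  rw [Finset.sum_congr rfl fun s _ => this s]
  rfl
end
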